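/- Let α > 0 and let P_α be the Pareto distribution function: P_α(x) = max(1 − x^{−α}, 0) for x > 0 and P_α(x) = 0 for x ≤ 0. Then for every integer n ≥ 1 and every x ∈ ℝ, max(n·P_α(n^{1/α}·x) − (n−1), 0) = P_α(x); that is, P_α is freely max-stable with normalizing constants aₙ = n^{1/α} and bₙ = 0. -/

import Mathlib

open Filter Topology

noncomputable def freePow (F : ℝ → ℝ) (n : ℕ) (x : ℝ) : ℝ :=
  max ((n : ℝ) * F x - ((n : ℝ) - 1)) 0

/-- Type II free extreme value law: the Pareto distribution function. -/
noncomputable def paretoDF (α : ℝ) (x : ℝ) : ℝ :=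
  if 0 < x then max (1 - x ^ (-α)) 0 else 0

/-- The Pareto distribution function is freely max-stable with
normalizing constants `aₙ = n^{1/α}`, `bₙ = 0`. -/
theorem paretoDF_freelyMaxStable (α : ℝ) (hα : 0 < α) :
    ∀ n : ℕ, 1 ≤ n → ∀ x : ℝ,
      freePow (paretoDF α) n ((n : ℝ) ^ (1 / α) * x + 0) = paretoDF α x := by
  intro n hn x
  have hn1 : (1 : ℝ) ≤ (n : ℝ) := by exact_mod_cast hn
  have hnpos : (0 : ℝ) < (n : ℝ) := by linarith
  have hcpos : (0 : ℝ) < (n : ℝ) ^ (1 / α) := Real.rpow_pos_of_pos hnpos _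
  rw [add_zero]
  by_cases hx : 0 < x
  · have hax : 0 < (n : ℝ) ^ (1 / α) * x := mul_pos hcpos hx
    have hkey : ((n : ℝ) ^ (1 / α) * x) ^ (-α) = (n : ℝ)⁻¹ * x ^ (-α) := by
      rw [Real.mul_rpow hcpos.le hx.le, ← Real.rpow_mul hnpos.le,
        show 1 / α * -α = -1 by field_simp, Real.rpow_neg_one]
    simp only [freePow, paretoDF, if_pos hx, if_pos hax, hkey]
    have hxpow : 0 < x ^ (-α) := Real.rpow_pos_of_pos hx _
    rcases le_or_gt (x ^ (-α)) (n : ℝ) with h | h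
    · have h1 : (0:ℝ) ≤ 1 - (n : ℝ)⁻¹ * x ^ (-α) := by
        rw [sub_nonneg, inv_mul_le_iff₀ hnpos]
        simpa using h
      rw [max_eq_left h1]
      have : (n : ℝ) * (1 - (n : ℝ)⁻¹ * x ^ (-α)) - ((n : ℝ) - 1) = 1 - x ^ (-α) := by
        field_simp
        ring
      rw [this]
    · have h1 : 1 - (n : ℝ)⁻¹ * x ^ (-α) ≤ 0 := by
        rw [sub_nonpos, le_inv_mul_iff₀ hnpos]
        nlinarith
      rw [max_eq_right h1]
      have h2 : 1 - x ^ (-α) ≤ 0 := by nlinarith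
      rw [max_eq_right h2, mul_zero, max_eq_right (by linarith)]
  · have hax : ¬ 0 < (n : ℝ) ^ (1 / α) * x := by
      push_neg at hx ⊢
      exact mul_nonpos_of_nonneg_of_nonpos hcpos.le hx
    simp only [freePow, paretoDF, if_neg hx, if_neg hax, mul_zero]
    rw [max_eq_right (by linarith)]
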